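/- arXiv:0806.3562 — 6 statements merged into one kernel-verified Lean document; each statement's English description precedes it below -/
import Mathlib

section
/- Let R be a closed relation between Polish spaces S1 and S2, and let f : S1 → [0,∞) be upper semicontinuous with compact support. Then the right conjugate f→(y) = sup{f(x) : x ∈ S1, (x,y) ∈ R} (with sup ∅ = 0) is upper semicontinuous on S2. -/
open Set Filter Topology

private lemma iSup_prop_le' {P : Prop} {a C : ℝ} (hC0 : 0 ≤ C) (h : P → a ≤ C) :
    (⨆ (_ : P), a) ≤ C := by
  by_cases hp : P
  · rw [ciSup_pos hp]; exact h hp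
  · haveI : IsEmpty P := ⟨hp⟩
    rw [Real.iSup_of_isEmpty]; exact hC0

private lemma zero_le_iSup_prop {P : Prop} {a : ℝ} (ha : 0 ≤ a) :
    (0 : ℝ) ≤ ⨆ (_ : P), a := by
  by_cases hp : P
  · rw [ciSup_pos hp]; exact ha
  · haveI : IsEmpty P := ⟨hp⟩
    rw [Real.iSup_of_isEmpty]

private lemma bound_exists {S1 : Type*} [TopologicalSpace S1] (f : S1 → ℝ)
    (hf : UpperSemicontinuous f) (hfc : HasCompactSupport f) :
    ∃ C : ℝ, 0 ≤ C ∧ ∀ x, f x ≤ C := by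
  have hK : IsCompact (tsupport f) := hfc
  have hcover : tsupport f ⊆ ⋃ n : ℕ, {x | f x < n} := by
    intro x _
    obtain ⟨n, hn⟩ := exists_nat_gt (f x)
    exact mem_iUnion.2 ⟨n, hn⟩
  obtain ⟨s, hs⟩ := hK.elim_finite_subcover (fun n : ℕ => {x | f x < n})
    (fun n => hf.isOpen_preimage n) hcover
  refine ⟨(s.sup id : ℕ), Nat.cast_nonneg _, fun x => ?_⟩
  by_cases hx : x ∈ tsupport f
  · obtain ⟨n, hn, hxn⟩ : ∃ n ∈ s, f x < n := by simpa using hs hx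
    exact hxn.le.trans (Nat.cast_le.2 (Finset.le_sup (f := id) hn))
  · rw [image_eq_zero_of_notMem_tsupport hx]
    positivity

/-- If `R` is a closed relation between Polish spaces and `f : S1 → [0,∞)` is upper
semicontinuous with compact support, then the right conjugate
`f→(y) = sup {f x : (x, y) ∈ R}` (with `sup ∅ = 0`) is upper semicontinuous on `S2`. -/
theorem rightConjugate_upperSemicontinuous
    {S1 S2 : Type*} [TopologicalSpace S1] [PolishSpace S1]
    [TopologicalSpace S2] [PolishSpace S2]
    (R : Set (S1 × S2)) (hR : IsClosed R)
    (f : S1 → ℝ) (hf : UpperSemicontinuous f) (hf0 : ∀ x, 0 ≤ f x)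
    (hfc : HasCompactSupport f) :
    UpperSemicontinuous (fun y : S2 => ⨆ x, ⨆ (_ : (x, y) ∈ R), f x) := by
  classical
  obtain ⟨C, hC0, hC⟩ := bound_exists f hf hfc
  cases isEmpty_or_nonempty S1 with
  | inl hE =>
      have hconst : (fun y : S2 => ⨆ x, ⨆ (_ : (x, y) ∈ R), f x) = fun _ => (0 : ℝ) := by
        funext y; exact Real.iSup_of_isEmpty _
      rw [hconst]; exact upperSemicontinuous_const
  | inr hNE =>
    set g : S2 → ℝ := fun y => ⨆ x, ⨆ (_ : (x, y) ∈ R), f x with hgdef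
    have hbdd : ∀ y, BddAbove (range fun x => ⨆ (_ : (x, y) ∈ R), f x) := by
      intro y
      refine ⟨C, fun r hr => ?_⟩
      obtain ⟨x, rfl⟩ := hr
      exact iSup_prop_le' hC0 fun _ => hC x
    have hg0 : ∀ y, 0 ≤ g y := by
      intro y
      obtain ⟨x⟩ := hNE
      exact le_trans (zero_le_iSup_prop (hf0 x)) (le_ciSup (hbdd y) x)
    intro y0 c hc
    set c' : ℝ := (g y0 + c) / 2 with hc'def
    have h1 : g y0 < c' := by rw [hc'def]; linarith
    have h2 : c' < c := by rw [hc'def]; linarith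
    have h0 : 0 ≤ c' := le_trans (hg0 y0) h1.le
    have hK : IsCompact (tsupport f) := hfc
    have key : ∀ x ∈ tsupport f, ∃ U ∈ 𝓝 x, ∃ V ∈ 𝓝 y0,
        ∀ z ∈ U, ∀ y ∈ V, (z, y) ∈ R → f z < c' := by
      intro x _
      by_cases hm : (x, y0) ∈ R
      · have hfx : f x < c' := by
          have e : (⨆ (_ : (x, y0) ∈ R), f x) = f x := ciSup_pos hm
          have : f x ≤ g y0 := e ▸ le_ciSup (hbdd y0) x
          linarith
        refine ⟨{z | f z < c'}, hf x c' hfx, univ, univ_mem, fun z hz y _ _ => hz⟩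
      · have hmem : Rᶜ ∈ 𝓝 (x, y0) := hR.isOpen_compl.mem_nhds hm
        rw [mem_nhds_prod_iff] at hmem
        obtain ⟨U, hU, V, hV, hUV⟩ := hmem
        exact ⟨U, hU, V, hV, fun z hz y hy hzy =>
          absurd hzy (hUV (mk_mem_prod hz hy))⟩
    choose! U hU V hV hUV using key
    obtain ⟨t, ht⟩ := hK.elim_nhds_subcover' (fun x hx => U x) (fun x hx => hU x hx)
    have hVmem : (⋂ x ∈ t, V x) ∈ 𝓝 y0 :=
      (Filter.biInter_finset_mem t).2 fun x hx => hV x x.2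
    filter_upwards [hVmem] with y hy
    have hgle : g y ≤ c' := by
      refine ciSup_le fun x => iSup_prop_le' h0 fun hm => ?_
      by_cases hx : x ∈ tsupport f
      · obtain ⟨i, hi, hxi⟩ : ∃ i ∈ t, x ∈ U (i : S1) := by
          simpa using ht hx
        have hyV : y ∈ V (i : S1) := by
          have := mem_iInter₂.1 hy i hi
          exact this
        exact (hUV i i.2 x hxi y hyV hm).le
      · rw [image_eq_zero_of_notMem_tsupport hx]; exact h0
    exact lt_of_le_of_lt hgle h2
end

section
/- Let R be a closed relation between Polish spaces S1 and S2, f : S1 → [0,∞) upper semicontinuous with compact support, and r > 0. Then the right conjugate of the superlevel set {x : f(x) ≥ r} equals the superlevel set of the conjugate: ({x : f(x) ≥ r})→ = {y : f→(y) ≥ r}. -/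
open Set

/-- An upper semicontinuous function attains its maximum on a nonempty compact set. -/
lemma real_iSup_neg {p : Prop} (hp : ¬p) (g : p → ℝ) : ⨆ h : p, g h = 0 := by
  haveI : IsEmpty p := ⟨hp⟩
  exact Real.iSup_of_isEmpty g

lemma usc_exists_max {S : Type*} [TopologicalSpace S] {f : S → ℝ} (hf : UpperSemicontinuous f)
    {C : Set S} (hC : IsCompact C) (hne : C.Nonempty) :
    ∃ x0 ∈ C, ∀ x ∈ C, f x ≤ f x0 := by
  by_contra h
  push_neg at h
  obtain ⟨t, ht⟩ := hC.elim_finite_subcover (fun x : C => {z | f z < f x.1})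
    (fun x => hf.isOpen_preimage (f x.1))
    (by
      intro z hz
      obtain ⟨x, hx, hlt⟩ := h z hz
      exact mem_iUnion.2 ⟨⟨x, hx⟩, hlt⟩)
  obtain ⟨z0, hz0⟩ := hne
  have htne : t.Nonempty := by
    rcases mem_iUnion₂.1 (ht hz0) with ⟨x, hx, _⟩
    exact ⟨x, hx⟩
  obtain ⟨xm, hxmt, hxm⟩ := t.exists_max_image (fun x => f x.1) htne
  rcases mem_iUnion₂.1 (ht xm.2) with ⟨x, hxt, hlt⟩
  exact absurd (hxm x hxt) (not_le.2 hlt)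

/-- For a closed relation `R` between Polish spaces, an upper semicontinuous compactly
supported `f : S1 → [0,∞)`, and `r > 0`, the right conjugate of the superlevel set
`{x | f x ≥ r}` equals the superlevel set of the conjugate function `f→`. -/
theorem rightConjugate_superlevel_eq
    {S1 S2 : Type*} [TopologicalSpace S1] [PolishSpace S1]
    [TopologicalSpace S2] [PolishSpace S2]
    (R : Set (S1 × S2)) (hR : IsClosed R)
    (f : S1 → ℝ) (hf : UpperSemicontinuous f) (hf0 : ∀ x, 0 ≤ f x)
    (hfc : HasCompactSupport f) (r : ℝ) (hr : 0 < r) :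
    {y : S2 | ∃ x ∈ {x : S1 | r ≤ f x}, (x, y) ∈ R}
      = {y : S2 | r ≤ ⨆ x, ⨆ (_ : (x, y) ∈ R), f x} := by
  -- a global bound on f
  obtain ⟨M, hM0, hM⟩ : ∃ M, 0 ≤ M ∧ ∀ x, f x ≤ M := by
    rcases (tsupport f).eq_empty_or_nonempty with he | hne
    · exact ⟨0, le_refl 0, fun x => le_of_eq
        (image_eq_zero_of_notMem_tsupport (by simp [he]))⟩
    · obtain ⟨x0, hx0, hmax⟩ := usc_exists_max hf hfc hne
      refine ⟨f x0, hf0 x0, fun x => ?_⟩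
      by_cases hx : x ∈ tsupport f
      · exact hmax x hx
      · rw [image_eq_zero_of_notMem_tsupport hx]; exact hf0 x0
  ext y
  simp only [mem_setOf_eq]
  constructor
  · rintro ⟨x, hx, hxy⟩
    have hbdd : BddAbove (range fun x => ⨆ (_ : (x, y) ∈ R), f x) := by
      refine ⟨M, ?_⟩
      rintro _ ⟨z, rfl⟩
      show (⨆ (_ : (z, y) ∈ R), f z) ≤ M
      by_cases hz : (z, y) ∈ R
      · rw [(ciSup_pos hz : (⨆ (_ : (z, y) ∈ R), f z) = f z)]; exact hM z
      · rw [real_iSup_neg hz]; exact hM0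
    calc r ≤ f x := hx
      _ = ⨆ (_ : (x, y) ∈ R), f x := (ciSup_pos hxy : (⨆ (_ : (x, y) ∈ R), f x) = f x).symm
      _ ≤ ⨆ x, ⨆ (_ : (x, y) ∈ R), f x := le_ciSup hbdd x
  · intro hy
    cases isEmpty_or_nonempty S1 with
    | inl hempty =>
        rw [Real.iSup_of_isEmpty] at hy
        linarith
    | inr hne1 =>
    by_contra h
    push_neg at h
    set C : Set S1 := {x | (x, y) ∈ R} ∩ tsupport f with hC
    have hCcl : IsClosed {x : S1 | (x, y) ∈ R} :=
      hR.preimage (Continuous.prodMk_left y : Continuous fun x : S1 => (x, y))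
    have hCc : IsCompact C := hfc.inter_left hCcl
    -- bound on each inner sup
    have key : ∀ B : ℝ, 0 ≤ B → (∀ x ∈ C, f x ≤ B) →
        (⨆ x, ⨆ (_ : (x, y) ∈ R), f x) ≤ B := by
      intro B hB0 hB
      refine ciSup_le fun x => ?_
      by_cases hx : (x, y) ∈ R
      · rw [(ciSup_pos hx : (⨆ (_ : (x, y) ∈ R), f x) = f x)]
        by_cases hxs : x ∈ tsupport f
        · exact hB x ⟨hx, hxs⟩
        · rw [image_eq_zero_of_notMem_tsupport hxs]; exact hB0
      · rw [real_iSup_neg hx]; exact hB0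
    rcases C.eq_empty_or_nonempty with he | hne
    · have : (⨆ x, ⨆ (_ : (x, y) ∈ R), f x) ≤ 0 :=
        key 0 le_rfl (fun x hx => by simp [he] at hx)
      linarith [hy]
    · obtain ⟨x0, hx0, hmax⟩ := usc_exists_max hf hCc hne
      have hsup : (⨆ x, ⨆ (_ : (x, y) ∈ R), f x) ≤ f x0 :=
        key (f x0) (hf0 x0) hmax
      have : r ≤ f x0 := le_trans hy hsup
      exact absurd hx0.1 (by have := h x0 this; exact this)
end

section
/- Define a relation on ℝ by x ≈ y iff |x − y| ≤ ε, for a fixed ε ≥ 0. Two real random variables X1 and X2 with cumulative distribution functions F1 and F2 admit a coupling (X̂1, X̂2) with |X̂1 − X̂2| ≤ ε almost surely if and only if F2(x − ε) ≤ F1(x) ≤ F2(x + ε) for all x ∈ ℝ. -/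
open Set MeasureTheory

open ProbabilityTheory Filter

/-- Quantile function (generalized inverse CDF). -/
noncomputable def qf (μ : Measure ℝ) (u : ℝ) : ℝ := sInf {x | u ≤ cdf μ x}

lemma qf_set_nonempty (μ : Measure ℝ) {u : ℝ} (hu1 : u < 1) :
    {x | u ≤ cdf μ x}.Nonempty := by
  obtain ⟨x, hx⟩ := ((tendsto_cdf_atTop μ).eventually (eventually_ge_nhds hu1)).exists
  exact ⟨x, hx⟩

lemma qf_set_bddBelow (μ : Measure ℝ) {u : ℝ} (hu0 : 0 < u) :
    BddBelow {x | u ≤ cdf μ x} := by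
  obtain ⟨x0, hx0⟩ := (eventually_atBot.mp
    ((tendsto_cdf_atBot μ).eventually (eventually_lt_nhds hu0)))
  refine ⟨x0, fun x hx => ?_⟩
  by_contra hlt
  exact absurd (hx0 x (le_of_not_ge hlt)) (not_lt.mpr hx)

lemma le_cdf_qf (μ : Measure ℝ) {u : ℝ} (hu0 : 0 < u) (hu1 : u < 1) :
    u ≤ cdf μ (qf μ u) := by
  have key : ∀ x, qf μ u < x → u ≤ cdf μ x := by
    intro x hx
    obtain ⟨s, hs, hsx⟩ := exists_lt_of_csInf_lt (qf_set_nonempty μ hu1) hx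
    exact hs.trans ((monotone_cdf μ) hsx.le)
  have hrc : Tendsto (cdf μ) (nhdsWithin (qf μ u) (Ioi (qf μ u)))
      (nhds (cdf μ (qf μ u))) :=
    ((cdf μ).right_continuous _).mono_left (nhdsWithin_mono _ Ioi_subset_Ici_self)
  exact ge_of_tendsto hrc (eventually_nhdsWithin_of_forall fun x hx => key x hx)

lemma qf_le_iff (μ : Measure ℝ) {u x : ℝ} (hu0 : 0 < u) (hu1 : u < 1) :
    qf μ u ≤ x ↔ u ≤ cdf μ x := by
  constructor
  · intro h
    exact (le_cdf_qf μ hu0 hu1).trans ((monotone_cdf μ) h)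
  · intro h
    exact csInf_le (qf_set_bddBelow μ hu0) h

lemma qf_monotoneOn (μ : Measure ℝ) : MonotoneOn (qf μ) (Ioo 0 1) := by
  intro u hu v hv huv
  exact csInf_le_csInf (qf_set_bddBelow μ hu.1) (qf_set_nonempty μ hv.2)
    (fun x hx => le_trans huv hx)

lemma vol_aux {c : ℝ} (h0 : 0 ≤ c) (h1 : c ≤ 1) :
    MeasureTheory.volume (Iic c ∩ Ioo (0:ℝ) 1) = ENNReal.ofReal c := by
  rcases lt_or_ge c 1 with hc | hc
  · have : Iic c ∩ Ioo (0:ℝ) 1 = Ioc 0 c := by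
      ext x
      simp only [mem_inter_iff, mem_Iic, mem_Ioo, mem_Ioc]
      exact ⟨fun h => ⟨h.2.1, h.1⟩, fun h => ⟨h.2, h.1, lt_of_le_of_lt h.2 hc⟩⟩
    rw [this, Real.volume_Ioc, sub_zero]
  · have hc1 : c = 1 := le_antisymm h1 hc
    have : Iic c ∩ Ioo (0:ℝ) 1 = Ioo 0 1 := by
      ext x
      simp only [mem_inter_iff, mem_Iic, mem_Ioo, hc1]
      exact ⟨fun h => h.2, fun h => ⟨h.2.le, h⟩⟩
    rw [this, Real.volume_Ioo, hc1]
    norm_num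

/-- For the relation `x ≈ y ↔ |x - y| ≤ ε` on `ℝ` (with `ε ≥ 0`), two real random
variables (identified with their distributions `μ1`, `μ2`) admit a coupling `(X̂1, X̂2)`
with `|X̂1 - X̂2| ≤ ε` almost surely if and only if their cumulative distribution
functions satisfy `F2(x - ε) ≤ F1(x) ≤ F2(x + ε)` for all `x`. -/
theorem coupling_abs_le_iff_cdf
    (μ1 μ2 : Measure ℝ) [IsProbabilityMeasure μ1] [IsProbabilityMeasure μ2]
    (ε : ℝ) (hε : 0 ≤ ε) :
    (∃ lam : Measure (ℝ × ℝ), IsProbabilityMeasure lam ∧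
        lam.fst = μ1 ∧ lam.snd = μ2 ∧ lam {p : ℝ × ℝ | |p.1 - p.2| ≤ ε} = 1)
      ↔ ∀ x : ℝ,
          μ2 (Set.Iic (x - ε)) ≤ μ1 (Set.Iic x) ∧ μ1 (Set.Iic x) ≤ μ2 (Set.Iic (x + ε)) := by
  have hSmeas : MeasurableSet {p : ℝ × ℝ | |p.1 - p.2| ≤ ε} :=
    measurableSet_le ((measurable_fst.sub measurable_snd).abs) measurable_const
  constructor
  · rintro ⟨lam, hprob, hfst, hsnd, hA⟩
    intro x
    set A := {p : ℝ × ℝ | |p.1 - p.2| ≤ ε} with hAdef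
    have hAc : lam Aᶜ = 0 := by
      have := measure_compl hSmeas (measure_ne_top lam A)
      rw [hA, measure_univ] at this
      simp [A, this]
    have key : ∀ s : Set (ℝ × ℝ), lam s ≤ lam (s ∩ A) := by
      intro s
      calc lam s ≤ lam ((s ∩ A) ∪ Aᶜ) := measure_mono (fun p hp => by
            by_cases h : p ∈ A
            · exact Or.inl ⟨hp, h⟩
            · exact Or.inr h)
        _ ≤ lam (s ∩ A) + lam Aᶜ := measure_union_le _ _
        _ = lam (s ∩ A) := by rw [hAc, add_zero]
    constructor
    · have h1 : μ2 (Iic (x - ε)) = lam (Prod.snd ⁻¹' Iic (x - ε)) := by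
        rw [← hsnd, Measure.snd_apply measurableSet_Iic]
      have h2 : μ1 (Iic x) = lam (Prod.fst ⁻¹' Iic x) := by
        rw [← hfst, Measure.fst_apply measurableSet_Iic]
      rw [h1, h2]
      refine (key _).trans (measure_mono ?_)
      rintro ⟨a, b⟩ ⟨hb, hab⟩
      simp only [mem_preimage, mem_Iic] at *
      have hab' : |a - b| ≤ ε := hab
      have := abs_le.mp hab'
      linarith [this.1]
    · have h1 : μ1 (Iic x) = lam (Prod.fst ⁻¹' Iic x) := by
        rw [← hfst, Measure.fst_apply measurableSet_Iic]
      have h2 : μ2 (Iic (x + ε)) = lam (Prod.snd ⁻¹' Iic (x + ε)) := by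
        rw [← hsnd, Measure.snd_apply measurableSet_Iic]
      rw [h1, h2]
      refine (key _).trans (measure_mono ?_)
      rintro ⟨a, b⟩ ⟨ha, hab⟩
      simp only [mem_preimage, mem_Iic] at *
      have hab' : |a - b| ≤ ε := hab
      have := abs_le.mp hab'
      linarith [this.2]
  · intro h
    -- cdf inequalities
    have hc12 : ∀ x : ℝ, cdf μ1 x ≤ cdf μ2 (x + ε) := by
      intro x
      rw [cdf_eq_real, cdf_eq_real, measureReal_def, measureReal_def]
      exact ENNReal.toReal_le_toReal (measure_ne_top _ _) (measure_ne_top _ _) |>.mpr (h x).2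
    have hc21 : ∀ x : ℝ, cdf μ2 x ≤ cdf μ1 (x + ε) := by
      intro x
      rw [cdf_eq_real, cdf_eq_real, measureReal_def, measureReal_def]
      refine (ENNReal.toReal_le_toReal (measure_ne_top _ _) (measure_ne_top _ _)).mpr ?_
      have := (h (x + ε)).1
      simpa using this
    set ν : Measure ℝ := MeasureTheory.volume.restrict (Ioo 0 1) with hν
    have hνprob : IsProbabilityMeasure ν := by
      constructor
      rw [hν, Measure.restrict_apply_univ, Real.volume_Ioo]
      norm_num
    set f : ℝ → ℝ × ℝ := fun u => (qf μ1 u, qf μ2 u) with hfdef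
    have hf : AEMeasurable f ν := by
      exact (aemeasurable_restrict_of_monotoneOn measurableSet_Ioo (qf_monotoneOn μ1)).prodMk
        (aemeasurable_restrict_of_monotoneOn measurableSet_Ioo (qf_monotoneOn μ2))
    refine ⟨ν.map f, ?_, ?_, ?_, ?_⟩
    · exact Measure.isProbabilityMeasure_map hf
    · -- fst = μ1
      have : IsProbabilityMeasure (ν.map f) := Measure.isProbabilityMeasure_map hf
      refine Measure.ext_of_Iic _ _ (fun x => ?_)
      rw [Measure.fst_apply measurableSet_Iic,
        Measure.map_apply_of_aemeasurable hf (measurable_fst measurableSet_Iic)]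
      have hpre : f ⁻¹' (Prod.fst ⁻¹' Iic x) ∩ Ioo 0 1 = Iic (cdf μ1 x) ∩ Ioo (0:ℝ) 1 := by
        ext u
        simp only [mem_inter_iff, mem_preimage, mem_Iic, mem_Ioo, hfdef]
        constructor
        · rintro ⟨hq, hu⟩
          exact ⟨(qf_le_iff μ1 hu.1 hu.2).mp hq, hu⟩
        · rintro ⟨hq, hu⟩
          exact ⟨(qf_le_iff μ1 hu.1 hu.2).mpr hq, hu⟩
      rw [hν, Measure.restrict_apply' measurableSet_Ioo, hpre,
        vol_aux (cdf_nonneg μ1 x) (cdf_le_one μ1 x), ofReal_cdf]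
    · -- snd = μ2
      refine Measure.ext_of_Iic _ _ (fun x => ?_)
      rw [Measure.snd_apply measurableSet_Iic,
        Measure.map_apply_of_aemeasurable hf (measurable_snd measurableSet_Iic)]
      have hpre : f ⁻¹' (Prod.snd ⁻¹' Iic x) ∩ Ioo 0 1 = Iic (cdf μ2 x) ∩ Ioo (0:ℝ) 1 := by
        ext u
        simp only [mem_inter_iff, mem_preimage, mem_Iic, mem_Ioo, hfdef]
        constructor
        · rintro ⟨hq, hu⟩
          exact ⟨(qf_le_iff μ2 hu.1 hu.2).mp hq, hu⟩
        · rintro ⟨hq, hu⟩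
          exact ⟨(qf_le_iff μ2 hu.1 hu.2).mpr hq, hu⟩
      rw [hν, Measure.restrict_apply' measurableSet_Ioo, hpre,
        vol_aux (cdf_nonneg μ2 x) (cdf_le_one μ2 x), ofReal_cdf]
    · -- the event
      have habs : ∀ u ∈ Ioo (0:ℝ) 1, |qf μ1 u - qf μ2 u| ≤ ε := by
        intro u hu
        have h1 : qf μ2 u ≤ qf μ1 u + ε := by
          refine (qf_le_iff μ2 hu.1 hu.2).mpr ?_
          exact (le_cdf_qf μ1 hu.1 hu.2).trans (hc12 _)
        have h2 : qf μ1 u ≤ qf μ2 u + ε := by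
          refine (qf_le_iff μ1 hu.1 hu.2).mpr ?_
          exact (le_cdf_qf μ2 hu.1 hu.2).trans (hc21 _)
        rw [abs_le]
        constructor <;> linarith
      rw [Measure.map_apply_of_aemeasurable hf hSmeas, hν,
        Measure.restrict_apply' measurableSet_Ioo]
      have : f ⁻¹' {p : ℝ × ℝ | |p.1 - p.2| ≤ ε} ∩ Ioo 0 1 = Ioo (0:ℝ) 1 := by
        apply inter_eq_self_of_subset_right
        intro u hu
        exact habs u hu
      rw [this, Real.volume_Ioo]
      norm_num
end

section
/- Let R⁽⁰⁾ ⊇ R⁽¹⁾ ⊇ ⋯ be a decreasing sequence of closed relations between Polish spaces S1 and S2, and set R* = ⋂_n R⁽ⁿ⁾. If probability measures μ1, μ2 satisfy (μ1, μ2) ∈ R⁽ⁿ⁾_st for every n (i.e., for each n there is a coupling λ_n with λ_n(R⁽ⁿ⁾) = 1), then there exists a coupling λ of μ1 and μ2 with λ(R*) = 1. -/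
open MeasureTheory

open Set Filter Topology ENNReal in
/-- Ulam tightness: a probability measure on a Polish space is tight. -/
lemma aux_tight_polish {X : Type*} [MeasurableSpace X] [TopologicalSpace X] [PolishSpace X]
    [BorelSpace X] (μ : Measure X) [IsProbabilityMeasure μ] {ε : ℝ≥0∞} (hε : ε ≠ 0) :
    ∃ K : Set X, IsCompact K ∧ μ Kᶜ ≤ ε := by
  letI := TopologicalSpace.upgradeIsCompletelyMetrizable X
  rcases isEmpty_or_nonempty X with hX | hX
  · refine ⟨∅, isCompact_empty, ?_⟩
    have : (Set.univ : Set X) = (∅ : Set X) := Set.univ_eq_empty_iff.2 hX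
    have h1 : (1 : ℝ≥0∞) = 0 := by
      rw [← measure_univ (μ := μ), this, measure_empty]
    simp at h1
  obtain ⟨δ, δpos, hδsum⟩ := ENNReal.exists_pos_sum_of_countable' hε ℕ
  set x : ℕ → X := TopologicalSpace.denseSeq X with hxdef
  have hx : DenseRange x := TopologicalSpace.denseRange_denseSeq X
  have hr : ∀ k : ℕ, (0 : ℝ) < ((k : ℝ) + 1)⁻¹ := fun k => by positivity
  set S : ℕ → ℕ → Set X := fun k n => ⋃ i ∈ Finset.range (n + 1),
    Metric.closedBall (x i) (((k : ℝ) + 1)⁻¹) with hSdef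
  have hSclosed : ∀ k n, IsClosed (S k n) := by
    intro k n
    apply Set.Finite.isClosed_biUnion (Finset.finite_toSet _)
    intro i _
    exact Metric.isClosed_closedBall
  have hball : ∀ k : ℕ, ∃ N : ℕ, μ (S k N)ᶜ ≤ δ k := by
    intro k
    have hmono : Monotone (S k) := by
      intro a b hab
      refine Set.iUnion₂_mono' fun i hi => ⟨i, ?_, subset_rfl⟩
      simp only [Finset.mem_range] at hi ⊢
      omega
    have hunion : (⋃ n, S k n) = Set.univ := by
      ext y
      simp only [Set.mem_iUnion, Set.mem_univ, iff_true]
      obtain ⟨i, hi⟩ := hx.exists_dist_lt y (hr k)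
      exact ⟨i, Set.mem_biUnion (Finset.self_mem_range_succ i)
        (Metric.mem_closedBall.2 (le_of_lt hi))⟩
    have htend := tendsto_measure_iUnion_atTop (μ := μ) hmono
    rw [hunion, measure_univ] at htend
    have hlt : (1 : ℝ≥0∞) - δ k < 1 :=
      ENNReal.sub_lt_self one_ne_top one_ne_zero (δpos k).ne'
    have hev : ∀ᶠ n in atTop, (1 : ℝ≥0∞) - δ k < μ (S k n) :=
      htend.eventually (eventually_gt_nhds hlt)
    obtain ⟨N, hN⟩ := hev.exists
    refine ⟨N, ?_⟩
    have hm : MeasurableSet (S k N) := (hSclosed k N).measurableSet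
    have hcompl : μ (S k N)ᶜ = 1 - μ (S k N) := prob_compl_eq_one_sub hm
    rw [hcompl, tsub_le_iff_right]
    calc (1 : ℝ≥0∞) ≤ (1 - δ k) + δ k := le_tsub_add
    _ ≤ μ (S k N) + δ k := add_le_add_left hN.le _
    _ ≤ δ k + μ (S k N) := by rw [add_comm]
  choose N hN using hball
  refine ⟨⋂ k, S k (N k), ?_, ?_⟩
  · apply TotallyBounded.isCompact_of_isClosed
    · rw [Metric.totallyBounded_iff]
      intro ε' hε'
      obtain ⟨k, hk⟩ := exists_nat_one_div_lt hε'
      refine ⟨x '' (Finset.range (N k + 1) : Set ℕ), ((Finset.range (N k + 1)).finite_toSet.image x), ?_⟩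
      intro y hy
      have hyS : y ∈ S k (N k) := Set.mem_iInter.1 hy k
      simp only [hSdef, Set.mem_iUnion] at hyS
      obtain ⟨i, hi, hyi⟩ := hyS
      refine Set.mem_biUnion (Set.mem_image_of_mem x hi) ?_
      rw [Metric.mem_ball]
      calc dist y (x i) ≤ ((k : ℝ) + 1)⁻¹ := Metric.mem_closedBall.1 hyi
      _ = 1 / ((k : ℝ) + 1) := (one_div _).symm
      _ < ε' := hk
    · exact isClosed_iInter fun k => hSclosed k (N k)
  · rw [Set.compl_iInter]
    calc μ (⋃ k, (S k (N k))ᶜ) ≤ ∑' k, μ (S k (N k))ᶜ := measure_iUnion_le _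
    _ ≤ ∑' k, δ k := ENNReal.tsum_le_tsum hN
    _ ≤ ε := hδsum.le

open Set Filter Topology ENNReal TopologicalSpace in
/-- An ultrafilter limit of a uniformly tight sequence of probability measures on a Polish
space, constructed via a content. The resulting measure is a probability measure whose value
on each open set is bounded by any eventual bound of the sequence along the ultrafilter. -/
lemma aux_exists_limit_measure {X : Type*} [MeasurableSpace X] [TopologicalSpace X]
    [PolishSpace X] [BorelSpace X] (lam : ℕ → Measure X)
    (hprob : ∀ n, IsProbabilityMeasure (lam n)) (U : Ultrafilter ℕ)
    (htight : ∀ ε : ℝ≥0∞, ε ≠ 0 → ∃ K : Set X, IsCompact K ∧ ∀ n, lam n Kᶜ ≤ ε) :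
    ∃ μ : Measure X, IsProbabilityMeasure μ ∧
      ∀ G : Set X, IsOpen G → ∀ c : ℝ≥0∞,
        (∀ᶠ n in (U : Filter ℕ), lam n G ≤ c) → μ G ≤ c := by
  letI := upgradeIsCompletelyMetrizable X
  -- the ultrafilter limit of the measures of a set
  set φ : Set X → ℝ≥0∞ := fun A => (U.map (fun n => lam n A)).lim with hφdef
  have hφt : ∀ A : Set X, Tendsto (fun n => lam n A) (U : Filter ℕ) (𝓝 (φ A)) := by
    intro A
    have h := (U.map (fun n => lam n A)).le_nhds_lim
    rwa [Ultrafilter.coe_map] at h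
  have hφle : ∀ {A : Set X} {c : ℝ≥0∞}, (∀ᶠ n in (U : Filter ℕ), lam n A ≤ c) → φ A ≤ c :=
    fun {A c} h => le_of_tendsto (hφt A) h
  have hφge : ∀ {A : Set X} {c : ℝ≥0∞}, (∀ᶠ n in (U : Filter ℕ), c ≤ lam n A) → c ≤ φ A :=
    fun {A c} h => ge_of_tendsto (hφt A) h
  have hφmono : ∀ {A B : Set X}, A ⊆ B → φ A ≤ φ B := fun {A B} h =>
    le_of_tendsto_of_tendsto' (hφt A) (hφt B) fun n => measure_mono h
  have hφuniv : φ Set.univ = 1 := by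
    refine le_antisymm (hφle (Eventually.of_forall fun n => ?_))
      (hφge (Eventually.of_forall fun n => ?_)) <;>
    · haveI := hprob n
      simp
  have hφsub : ∀ A B : Set X, φ (A ∪ B) ≤ φ A + φ B := fun A B =>
    le_of_tendsto_of_tendsto' (hφt (A ∪ B)) ((hφt A).add (hφt B))
      fun n => measure_union_le A B
  -- the regularized set function on compacts
  set β : Set X → ℝ≥0∞ := fun K => ⨅ V : {V : Set X // IsOpen V ∧ K ⊆ V}, φ V.1 with hβdef
  haveI hβnonempty : ∀ K : Set X, Nonempty {V : Set X // IsOpen V ∧ K ⊆ V} :=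
    fun K => ⟨⟨Set.univ, isOpen_univ, Set.subset_univ K⟩⟩
  have hβ_le_φ : ∀ {K V : Set X}, IsOpen V → K ⊆ V → β K ≤ φ V :=
    fun {K V} hV hKV => iInf_le (fun V : {V : Set X // IsOpen V ∧ K ⊆ V} => φ V.1) ⟨V, hV, hKV⟩
  have hβle1 : ∀ K : Set X, β K ≤ 1 := fun K =>
    (hβ_le_φ isOpen_univ (Set.subset_univ K)).trans (le_of_eq hφuniv)
  have hβne : ∀ K : Set X, β K ≠ ∞ := fun K => ((hβle1 K).trans_lt one_lt_top).ne
  have hφ_le_β : ∀ K : Set X, φ K ≤ β K := fun K => le_iInf fun V => hφmono V.2.2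
  have hβmono : ∀ {K1 K2 : Set X}, K1 ⊆ K2 → β K1 ≤ β K2 := fun {K1 K2} h =>
    le_iInf fun V => iInf_le_of_le ⟨V.1, V.2.1, h.trans V.2.2⟩ le_rfl
  have hβsub : ∀ K1 K2 : Set X, β (K1 ∪ K2) ≤ β K1 + β K2 := by
    intro K1 K2
    rw [hβdef]
    simp only
    rw [ENNReal.iInf_add]
    refine le_iInf fun V1 => ?_
    rw [ENNReal.add_iInf]
    refine le_iInf fun V2 => ?_
    refine le_trans (hβ_le_φ (V1.2.1.union V2.2.1) (Set.union_subset_union V1.2.2 V2.2.2)) ?_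
    exact hφsub _ _
  have hβadd : ∀ K1 K2 : Set X, IsCompact K1 → IsCompact K2 → Disjoint K1 K2 →
      β (K1 ∪ K2) = β K1 + β K2 := by
    intro K1 K2 hc1 hc2 hdisj
    refine le_antisymm (hβsub K1 K2) ?_
    obtain ⟨W1, W2, hW1, hW2, hKW1, hKW2, hWdisj⟩ :=
      SeparatedNhds.of_isCompact_isCompact hc1 hc2 hdisj
    refine le_iInf fun V => ?_
    have h1 : β K1 ≤ φ (V.1 ∩ W1) :=
      hβ_le_φ (V.2.1.inter hW1) (Set.subset_inter ((Set.subset_union_left).trans V.2.2) hKW1)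
    have h2 : β K2 ≤ φ (V.1 ∩ W2) :=
      hβ_le_φ (V.2.1.inter hW2) (Set.subset_inter ((Set.subset_union_right).trans V.2.2) hKW2)
    refine le_trans (add_le_add h1 h2) ?_
    refine le_of_tendsto_of_tendsto' ((hφt _).add (hφt _)) (hφt V.1) fun n => ?_
    have hd : Disjoint (V.1 ∩ W1) (V.1 ∩ W2) :=
      (hWdisj.mono Set.inter_subset_right Set.inter_subset_right)
    have hm : MeasurableSet (V.1 ∩ W2) := (V.2.1.inter hW2).measurableSet
    calc lam n (V.1 ∩ W1) + lam n (V.1 ∩ W2) = lam n ((V.1 ∩ W1) ∪ (V.1 ∩ W2)) :=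
          (measure_union hd hm).symm
    _ ≤ lam n V.1 := measure_mono (Set.union_subset Set.inter_subset_left Set.inter_subset_left)
  -- the content
  set C : Content X :=
    { toFun := fun K => (β K).toNNReal
      mono' := fun K1 K2 h => ENNReal.toNNReal_mono (hβne _) (hβmono h)
      sup_disjoint' := by
        intro K1 K2 hdisj _ _
        simp only [Compacts.coe_sup]
        rw [hβadd K1 K2 K1.2 K2.2 hdisj, ENNReal.toNNReal_add (hβne _) (hβne _)]
      sup_le' := by
        intro K1 K2
        simp only [Compacts.coe_sup]
        have := hβsub K1 K2
        calc (β (↑K1 ∪ ↑K2)).toNNReal ≤ (β ↑K1 + β ↑K2).toNNReal :=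
              ENNReal.toNNReal_mono (by
                exact ENNReal.add_ne_top.2 ⟨hβne _, hβne _⟩) this
        _ = (β ↑K1).toNNReal + (β ↑K2).toNNReal := ENNReal.toNNReal_add (hβne _) (hβne _) }
    with hCdef
  have hCcoe : ∀ K : TopologicalSpace.Compacts X, (C K : ℝ≥0∞) = β K := by
    intro K
    change ((C.toFun K : NNReal) : ℝ≥0∞) = β K
    simp only [hCdef]
    exact ENNReal.coe_toNNReal (hβne _)
  set μ : Measure X := C.measure with hμdef
  -- value on open sets
  have hopen : ∀ G : Set X, IsOpen G → μ G ≤ φ G := by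
    intro G hG
    rw [hμdef, C.measure_apply hG.measurableSet, C.outerMeasure_of_isOpen G hG]
    refine iSup₂_le fun K hKG => ?_
    rw [hCcoe]
    exact hβ_le_φ hG hKG
  have hμuniv_le : μ Set.univ ≤ 1 := (hopen _ isOpen_univ).trans (le_of_eq hφuniv)
  have hμuniv_ge : (1 : ℝ≥0∞) ≤ μ Set.univ := by
    refine ENNReal.le_of_forall_pos_le_add fun ε hε hlt => ?_
    obtain ⟨K, hKcomp, hKtight⟩ := htight ε (by exact_mod_cast hε.ne')
    have h1 : (C ⟨K, hKcomp⟩ : ℝ≥0∞) ≤ μ Set.univ := by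
      rw [hμdef, C.measure_apply MeasurableSet.univ,
        C.outerMeasure_of_isOpen Set.univ isOpen_univ]
      exact le_trans (le_iSup₂ (f := fun (K' : Compacts X) (_ : (K' : Set X) ⊆ Set.univ) =>
        (C K' : ℝ≥0∞)) ⟨K, hKcomp⟩ (Set.subset_univ K)) le_rfl
    have h2 : (1 : ℝ≥0∞) - ε ≤ φ K := by
      refine hφge (Eventually.of_forall fun n => ?_)
      haveI := hprob n
      rw [tsub_le_iff_right]
      calc (1 : ℝ≥0∞) = lam n Set.univ := (measure_univ).symm
      _ = lam n (K ∪ Kᶜ) := by rw [Set.union_compl_self]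
      _ ≤ lam n K + lam n Kᶜ := measure_union_le _ _
      _ ≤ lam n K + ε := add_le_add_right (hKtight n) _
    calc (1 : ℝ≥0∞) ≤ (1 - ε) + ε := le_tsub_add
    _ ≤ φ K + ε := add_le_add_left h2 _
    _ ≤ β K + ε := add_le_add_left (hφ_le_β K) _
    _ = (C ⟨K, hKcomp⟩ : ℝ≥0∞) + ε := by rw [hCcoe]; rfl
    _ ≤ μ Set.univ + ε := add_le_add_left h1 _
  refine ⟨μ, ⟨le_antisymm hμuniv_le hμuniv_ge⟩, fun G hG c hc => (hopen G hG).trans (hφle hc)⟩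

/-- Let `R 0 ⊇ R 1 ⊇ ⋯` be a decreasing sequence of closed relations between Polish
spaces and `R* = ⋂ n, R n`. If `μ1` and `μ2` admit, for each `n`, a coupling `λ_n` with
`λ_n (R n) = 1`, then they admit a coupling `λ` with `λ(R*) = 1`. -/
theorem coupling_of_decreasing_relations
    {S1 S2 : Type*}
    [MeasurableSpace S1] [TopologicalSpace S1] [PolishSpace S1] [BorelSpace S1]
    [MeasurableSpace S2] [TopologicalSpace S2] [PolishSpace S2] [BorelSpace S2]
    (R : ℕ → Set (S1 × S2)) (hRclosed : ∀ n, IsClosed (R n))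
    (hRmono : ∀ n, R (n + 1) ⊆ R n)
    (μ1 : Measure S1) (μ2 : Measure S2)
    [IsProbabilityMeasure μ1] [IsProbabilityMeasure μ2]
    (h : ∀ n, ∃ lam : Measure (S1 × S2), IsProbabilityMeasure lam ∧
        lam.fst = μ1 ∧ lam.snd = μ2 ∧ lam (R n) = 1) :
    ∃ lam : Measure (S1 × S2), IsProbabilityMeasure lam ∧
      lam.fst = μ1 ∧ lam.snd = μ2 ∧ lam (⋂ n, R n) = 1 := by
  classical
  choose lam hp hfst hsnd hlam using h
  haveI : T2Space S1 := by
    letI := TopologicalSpace.upgradeIsCompletelyMetrizable S1; infer_instance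
  haveI : T2Space S2 := by
    letI := TopologicalSpace.upgradeIsCompletelyMetrizable S2; infer_instance
  set U : Ultrafilter ℕ := Ultrafilter.of (Filter.cofinite : Filter ℕ) with hUdef
  have hUle : (U : Filter ℕ) ≤ Filter.cofinite := Ultrafilter.of_le _
  -- uniform tightness of the couplings
  have htight : ∀ ε : ENNReal, ε ≠ 0 → ∃ K : Set (S1 × S2), IsCompact K ∧
      ∀ n, lam n Kᶜ ≤ ε := by
    intro ε hε
    have hε2 : ε / 2 ≠ 0 := (ENNReal.half_pos hε).ne'
    obtain ⟨K1, hK1c, hK1⟩ := aux_tight_polish μ1 hε2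
    obtain ⟨K2, hK2c, hK2⟩ := aux_tight_polish μ2 hε2
    refine ⟨K1 ×ˢ K2, hK1c.prod hK2c, fun n => ?_⟩
    have hsub : (K1 ×ˢ K2)ᶜ ⊆ (Prod.fst ⁻¹' K1ᶜ) ∪ (Prod.snd ⁻¹' K2ᶜ) := by
      rintro ⟨a, b⟩ hab
      rw [Set.mem_compl_iff, Set.mem_prod] at hab
      rw [Set.mem_union, Set.mem_preimage, Set.mem_preimage, Set.mem_compl_iff,
        Set.mem_compl_iff]
      tauto
    have hm1 : MeasurableSet K1ᶜ := hK1c.isClosed.measurableSet.compl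
    have hm2 : MeasurableSet K2ᶜ := hK2c.isClosed.measurableSet.compl
    calc lam n (K1 ×ˢ K2)ᶜ ≤ lam n (Prod.fst ⁻¹' K1ᶜ) + lam n (Prod.snd ⁻¹' K2ᶜ) :=
          (measure_mono hsub).trans (measure_union_le _ _)
    _ = μ1 K1ᶜ + μ2 K2ᶜ := by
        rw [← Measure.fst_apply hm1, ← Measure.snd_apply hm2, hfst n, hsnd n]
    _ ≤ ε / 2 + ε / 2 := add_le_add hK1 hK2
    _ = ε := ENNReal.add_halves ε
  obtain ⟨μ, hμprob, hμle⟩ := aux_exists_limit_measure lam hp U htight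
  haveI := hμprob
  -- the first marginal
  have hkey1 : ∀ s : Set S1, MeasurableSet s → μ.fst s ≤ μ1 s := by
    intro s hs
    rw [Measure.fst_apply hs, Set.measure_eq_iInf_isOpen s μ1]
    refine le_iInf fun G => le_iInf fun hsG => le_iInf fun hGopen => ?_
    calc μ (Prod.fst ⁻¹' s) ≤ μ (Prod.fst ⁻¹' G) := measure_mono (Set.preimage_mono hsG)
    _ ≤ μ1 G := by
        refine hμle _ (hGopen.preimage continuous_fst) _
          (Filter.Eventually.of_forall fun n => le_of_eq ?_)
        rw [← Measure.fst_apply hGopen.measurableSet, hfst n]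
  have hmarg1 : μ.fst = μ1 := by
    ext s hs
    refine le_antisymm (hkey1 s hs) ?_
    have e1 : μ.fst s = 1 - μ.fst sᶜ := by
      have := prob_compl_eq_one_sub (μ := μ.fst) hs.compl
      rwa [compl_compl] at this
    have e2 : μ1 s = 1 - μ1 sᶜ := by
      have := prob_compl_eq_one_sub (μ := μ1) hs.compl
      rwa [compl_compl] at this
    rw [e1, e2]
    exact tsub_le_tsub_left (hkey1 sᶜ hs.compl) 1
  -- the second marginal
  have hkey2 : ∀ s : Set S2, MeasurableSet s → μ.snd s ≤ μ2 s := by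
    intro s hs
    rw [Measure.snd_apply hs, Set.measure_eq_iInf_isOpen s μ2]
    refine le_iInf fun G => le_iInf fun hsG => le_iInf fun hGopen => ?_
    calc μ (Prod.snd ⁻¹' s) ≤ μ (Prod.snd ⁻¹' G) := measure_mono (Set.preimage_mono hsG)
    _ ≤ μ2 G := by
        refine hμle _ (hGopen.preimage continuous_snd) _
          (Filter.Eventually.of_forall fun n => le_of_eq ?_)
        rw [← Measure.snd_apply hGopen.measurableSet, hsnd n]
  have hmarg2 : μ.snd = μ2 := by
    ext s hs
    refine le_antisymm (hkey2 s hs) ?_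
    have e1 : μ.snd s = 1 - μ.snd sᶜ := by
      have := prob_compl_eq_one_sub (μ := μ.snd) hs.compl
      rwa [compl_compl] at this
    have e2 : μ2 s = 1 - μ2 sᶜ := by
      have := prob_compl_eq_one_sub (μ := μ2) hs.compl
      rwa [compl_compl] at this
    rw [e1, e2]
    exact tsub_le_tsub_left (hkey2 sᶜ hs.compl) 1
  -- full measure of the intersection
  have hRanti : ∀ {a b : ℕ}, a ≤ b → R b ⊆ R a := by
    intro a b hab
    induction b, hab using Nat.le_induction with
    | base => exact subset_rfl
    | succ n hn ih => exact (hRmono n).trans ih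
  have hR0 : ∀ m, μ (R m)ᶜ = 0 := by
    intro m
    refine le_antisymm ?_ zero_le
    refine hμle _ (hRclosed m).isOpen_compl _ ?_
    refine Filter.Eventually.filter_mono hUle ?_
    rw [Nat.cofinite_eq_atTop]
    filter_upwards [Filter.eventually_ge_atTop m] with n hn
    have hsub : (R m)ᶜ ⊆ (R n)ᶜ := Set.compl_subset_compl.mpr (hRanti hn)
    calc lam n (R m)ᶜ ≤ lam n (R n)ᶜ := measure_mono hsub
    _ = 0 := by
        haveI := hp n
        exact (prob_compl_eq_zero_iff (hRclosed n).measurableSet).mpr (hlam n)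
  have hfull : μ (⋂ n, R n) = 1 := by
    have hc : μ (⋂ n, R n)ᶜ = 0 := by
      rw [Set.compl_iInter]
      exact measure_iUnion_null hR0
    exact (prob_compl_eq_zero_iff
      (MeasurableSet.iInter fun n => (hRclosed n).measurableSet)).mp hc
  exact ⟨μ, hμprob, hmarg1, hmarg2, hfull⟩
end

section
/- Let X1, X2 be Markov processes on Polish spaces with unique stationary distributions μ1, μ2 such that X_i(x_i, t) converges weakly to μ_i as t → ∞ for every initial state x_i. If there exists a nonempty closed relation R' ⊆ R such that x1 R' x2 implies X1(x1,t) ~_{R'_st} X2(x2,t) for all t, then (μ1, μ2) ∈ R_st. -/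
open MeasureTheory Filter Topology Set Metric TopologicalSpace
open scoped ENNReal NNReal

set_option maxHeartbeats 1000000

namespace StatRelAux

/-! ### Limits along an ultrafilter in `ℝ≥0∞` -/

noncomputable def ulim (U : Ultrafilter ℕ) (f : ℕ → ℝ≥0∞) : ℝ≥0∞ :=
  (U.map f).lim

lemma tendsto_ulim (U : Ultrafilter ℕ) (f : ℕ → ℝ≥0∞) :
    Tendsto f ↑U (𝓝 (ulim U f)) := by
  have h := (U.map f).le_nhds_lim
  rwa [Tendsto, ← Ultrafilter.coe_map]

lemma ulim_eq {U : Ultrafilter ℕ} {f : ℕ → ℝ≥0∞} {x : ℝ≥0∞}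
    (h : Tendsto f ↑U (𝓝 x)) : ulim U f = x :=
  tendsto_nhds_unique (tendsto_ulim U f) h

lemma ulim_const (U : Ultrafilter ℕ) (c : ℝ≥0∞) : ulim U (fun _ => c) = c :=
  ulim_eq tendsto_const_nhds

lemma ulim_mono {U : Ultrafilter ℕ} {f g : ℕ → ℝ≥0∞} (h : ∀ n, f n ≤ g n) :
    ulim U f ≤ ulim U g :=
  le_of_tendsto_of_tendsto' (tendsto_ulim U f) (tendsto_ulim U g) h

lemma ulim_add (U : Ultrafilter ℕ) (f g : ℕ → ℝ≥0∞) :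
    ulim U (fun n => f n + g n) = ulim U f + ulim U g :=
  ulim_eq ((tendsto_ulim U f).add (tendsto_ulim U g))

lemma const_le_ulim {U : Ultrafilter ℕ} {f : ℕ → ℝ≥0∞} {c : ℝ≥0∞}
    (h : ∀ n, c ≤ f n) : c ≤ ulim U f := by
  have := ulim_mono (U := U) (f := fun _ => c) (g := f) h
  rwa [ulim_const] at this

lemma ulim_le_const {U : Ultrafilter ℕ} {f : ℕ → ℝ≥0∞} {c : ℝ≥0∞}
    (h : ∀ n, f n ≤ c) : ulim U f ≤ c := by
  have := ulim_mono (U := U) (f := f) (g := fun _ => c) h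
  rwa [ulim_const] at this


/-! ### Construction of a limit measure along an ultrafilter -/

section Construction

variable {Y : Type*} [MetricSpace Y] [MeasurableSpace Y] [BorelSpace Y]

lemma exists_limit_measure (U : Ultrafilter ℕ)
    (lam : ℕ → Measure Y) (hprob : ∀ n, IsProbabilityMeasure (lam n))
    (htight : ∀ δ : ℝ≥0∞, δ ≠ 0 → ∃ K : Set Y, IsCompact K ∧ ∀ n, lam n Kᶜ ≤ δ) :
    ∃ μ : Measure Y, IsProbabilityMeasure μ ∧
      (∀ G : Set Y, IsOpen G → μ G ≤ ulim U (fun n => lam n G)) ∧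
      (∀ F : Set Y, IsClosed F → ulim U (fun n => lam n F) ≤ μ F) := by
  classical
  set τ : Set Y → ℝ≥0∞ := fun A => ulim U (fun n => lam n A) with hτ
  have τuniv : τ univ = 1 := by
    have : (fun n => lam n univ) = fun _ => (1 : ℝ≥0∞) := by
      funext n; exact (hprob n).measure_univ
    simp only [hτ, this, ulim_const]
  have τmono : ∀ {A B : Set Y}, A ⊆ B → τ A ≤ τ B := by
    intro A B hAB
    exact ulim_mono (fun n => measure_mono hAB)
  have τle1 : ∀ A : Set Y, τ A ≤ 1 := by
    intro A
    exact (τmono (subset_univ A)).trans τuniv.le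
  have τne_top : ∀ A : Set Y, τ A ≠ ∞ := fun A => ((τle1 A).trans_lt ENNReal.one_lt_top).ne
  have τadd_le : ∀ A B : Set Y, τ (A ∪ B) ≤ τ A + τ B := by
    intro A B
    rw [hτ, ← ulim_add]
    exact ulim_mono (fun n => measure_union_le A B)
  have τadd_eq : ∀ A B : Set Y, Disjoint A B → MeasurableSet B → τ (A ∪ B) = τ A + τ B := by
    intro A B hd hB
    show ulim U (fun n => lam n (A ∪ B)) = ulim U (fun n => lam n A) + ulim U (fun n => lam n B)
    rw [← ulim_add]
    congr 1
    funext n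
    exact measure_union hd hB
  -- the content associated to the ultrafilter limit
  set lamK : Compacts Y → ℝ≥0∞ :=
    fun K => ⨅ G : {G : Set Y // IsOpen G ∧ (K : Set Y) ⊆ G}, τ G with hlamK
  have lamK_le : ∀ (K : Compacts Y) (G : Set Y), IsOpen G → (K : Set Y) ⊆ G →
      lamK K ≤ τ G := by
    intro K G hG hKG
    exact iInf_le _ (⟨G, hG, hKG⟩ : {G : Set Y // IsOpen G ∧ (K : Set Y) ⊆ G})
  have lamK_le_one : ∀ K : Compacts Y, lamK K ≤ 1 := by
    intro K
    exact (lamK_le K univ isOpen_univ (subset_univ _)).trans (τle1 _)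
  have lamK_ne_top : ∀ K : Compacts Y, lamK K ≠ ∞ :=
    fun K => ((lamK_le_one K).trans_lt ENNReal.one_lt_top).ne
  have le_lamK : ∀ (K : Compacts Y) (c : ℝ≥0∞),
      (∀ G : Set Y, IsOpen G → (K : Set Y) ⊆ G → c ≤ τ G) → c ≤ lamK K := by
    intro K c h
    exact le_iInf (fun G => h G.1 G.2.1 G.2.2)
  have lamK_mono : ∀ K₁ K₂ : Compacts Y, (K₁ : Set Y) ⊆ K₂ → lamK K₁ ≤ lamK K₂ := by
    intro K₁ K₂ h
    refine le_iInf (fun G => ?_)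
    exact lamK_le K₁ G.1 G.2.1 (h.trans G.2.2)
  have lamK_sup_le : ∀ K₁ K₂ : Compacts Y, lamK (K₁ ⊔ K₂) ≤ lamK K₁ + lamK K₂ := by
    intro K₁ K₂
    rw [hlamK]
    rw [ENNReal.iInf_add]
    refine le_iInf (fun G₁ => ?_)
    rw [ENNReal.add_iInf]
    refine le_iInf (fun G₂ => ?_)
    refine le_trans (lamK_le (K₁ ⊔ K₂) (G₁.1 ∪ G₂.1) (G₁.2.1.union G₂.2.1) ?_) (τadd_le _ _)
    rw [Compacts.coe_sup]
    exact union_subset_union G₁.2.2 G₂.2.2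
  have lamK_sup_disjoint : ∀ K₁ K₂ : Compacts Y, Disjoint (K₁ : Set Y) K₂ →
      lamK K₁ + lamK K₂ ≤ lamK (K₁ ⊔ K₂) := by
    intro K₁ K₂ hd
    refine le_lamK _ _ (fun G hG hKG => ?_)
    obtain ⟨V₁, V₂, hV₁, hV₂, hKV₁, hKV₂, hVd⟩ :=
      SeparatedNhds.of_isCompact_isCompact K₁.2 K₂.2 hd
    rw [Compacts.coe_sup] at hKG
    have h₁ : lamK K₁ ≤ τ (G ∩ V₁) :=
      lamK_le _ _ (hG.inter hV₁) (subset_inter (subset_union_left.trans hKG) hKV₁)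
    have h₂ : lamK K₂ ≤ τ (G ∩ V₂) :=
      lamK_le _ _ (hG.inter hV₂) (subset_inter (subset_union_right.trans hKG) hKV₂)
    calc lamK K₁ + lamK K₂ ≤ τ (G ∩ V₁) + τ (G ∩ V₂) := add_le_add h₁ h₂
      _ = τ ((G ∩ V₁) ∪ (G ∩ V₂)) := by
          refine (τadd_eq _ _ ?_ (hG.inter hV₂).measurableSet).symm
          exact hVd.mono inter_subset_right inter_subset_right
      _ ≤ τ G := τmono (union_subset inter_subset_left inter_subset_left)
  -- build the content
  set C : Content Y :=
    { toFun := fun K => (lamK K).toNNReal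
      mono' := by
        intro K₁ K₂ h
        exact ENNReal.toNNReal_mono (lamK_ne_top _) (lamK_mono _ _ h)
      sup_disjoint' := by
        intro K₁ K₂ hd _ _
        have h := le_antisymm (lamK_sup_le K₁ K₂) (lamK_sup_disjoint K₁ K₂ hd)
        show (lamK (K₁ ⊔ K₂)).toNNReal = (lamK K₁).toNNReal + (lamK K₂).toNNReal
        rw [h, ENNReal.toNNReal_add (lamK_ne_top K₁) (lamK_ne_top K₂)]
      sup_le' := by
        intro K₁ K₂
        have h := lamK_sup_le K₁ K₂
        rw [← ENNReal.coe_le_coe, ENNReal.coe_toNNReal (lamK_ne_top _)]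
        refine h.trans ?_
        rw [ENNReal.coe_add, ENNReal.coe_toNNReal (lamK_ne_top _),
          ENNReal.coe_toNNReal (lamK_ne_top _)] } with hC
  have hCK : ∀ K : Compacts Y, (C K : ℝ≥0∞) = lamK K := by
    intro K
    show ((lamK K).toNNReal : ℝ≥0∞) = lamK K
    exact ENNReal.coe_toNNReal (lamK_ne_top K)
  set μ : Measure Y := C.measure with hμ
  -- open sets
  have hopen : ∀ G : Set Y, IsOpen G → μ G ≤ τ G := by
    intro G hG
    rw [hμ, C.measure_apply hG.measurableSet, C.outerMeasure_of_isOpen G hG]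
    refine iSup₂_le (fun K hK => ?_)
    rw [hCK]
    exact lamK_le K G hG hK
  -- total mass
  have hle1 : μ univ ≤ 1 := (hopen univ isOpen_univ).trans (τle1 _)
  have hge1 : (1 : ℝ≥0∞) ≤ μ univ := by
    refine ENNReal.le_of_forall_pos_le_add (fun ε hε _ => ?_)
    obtain ⟨K, hKc, hK⟩ := htight ε (by exact_mod_cast hε.ne')
    have hKmeas : ∀ n, (1 : ℝ≥0∞) - ε ≤ lam n K := by
      intro n
      rw [tsub_le_iff_right]
      calc (1 : ℝ≥0∞) = lam n univ := (hprob n).measure_univ.symm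
        _ ≤ lam n K + lam n Kᶜ := by
            rw [← union_compl_self K] ; exact measure_union_le _ _
        _ ≤ lam n K + ε := add_le_add le_rfl (hK n)
    have hlamKge : (1 : ℝ≥0∞) - ε ≤ lamK ⟨K, hKc⟩ := by
      refine le_lamK _ _ (fun G hG hKG => ?_)
      exact const_le_ulim (fun n => le_trans (hKmeas n) (measure_mono hKG))
    have hμK : lamK ⟨K, hKc⟩ ≤ μ univ := by
      rw [hμ, C.measure_apply MeasurableSet.univ, C.outerMeasure_of_isOpen univ isOpen_univ]
      rw [← hCK]
      exact le_iSup₂ (f := fun (K : Compacts Y) (_ : (K : Set Y) ⊆ (univ : Set Y)) => (C K : ℝ≥0∞))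
        (⟨K, hKc⟩ : Compacts Y) (subset_univ K)
    rw [← tsub_le_iff_right]
    exact hlamKge.trans hμK
  have hprobμ : IsProbabilityMeasure μ := ⟨le_antisymm hle1 hge1⟩
  -- closed sets
  have hclosed : ∀ F : Set Y, IsClosed F → τ F ≤ μ F := by
    intro F hF
    have h1 : τ F + τ Fᶜ = 1 := by
      rw [hτ, ← ulim_add]
      have : (fun n => lam n F + lam n Fᶜ) = fun _ => (1 : ℝ≥0∞) := by
        funext n
        rw [measure_add_measure_compl hF.measurableSet, (hprob n).measure_univ]
      rw [this, ulim_const]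
    have h2 : μ F + μ Fᶜ = 1 := by
      rw [measure_add_measure_compl hF.measurableSet, hprobμ.measure_univ]
    have h3 : μ Fᶜ ≤ τ Fᶜ := hopen _ hF.isOpen_compl
    have e1 : τ F = 1 - τ Fᶜ := ENNReal.eq_sub_of_add_eq (τne_top _) h1
    have e2 : μ F = 1 - μ Fᶜ := ENNReal.eq_sub_of_add_eq
      (((measure_mono (subset_univ _)).trans_lt
        (by rw [hprobμ.measure_univ]; exact ENNReal.one_lt_top)).ne) h2
    rw [e1, e2]
    exact tsub_le_tsub_left h3 1
  exact ⟨μ, hprobμ, hopen, hclosed⟩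

end Construction


/-! ### Tightness of a weakly convergent sequence of probability measures -/

section Tight

variable {S : Type*} [MetricSpace S] [CompleteSpace S] [SecondCountableTopology S]
  [MeasurableSpace S] [BorelSpace S]

lemma tight_of_tendsto (ν : ℕ → ProbabilityMeasure S) (μ : ProbabilityMeasure S)
    (hconv : Tendsto ν atTop (𝓝 μ)) {δ : ℝ≥0∞} (hδ : δ ≠ 0) :
    ∃ K : Set S, IsCompact K ∧ ∀ n, (ν n : Measure S) Kᶜ ≤ δ := by
  classical
  -- the space is nonempty
  rcases isEmpty_or_nonempty S with hS | hS
  · refine ⟨∅, isCompact_empty, fun n => ?_⟩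
    have h0 : (univ : Set S) = ∅ := univ_eq_empty_iff.mpr hS
    have := measure_univ (μ := (ν n : Measure S))
    simp only [h0, measure_empty] at this
    exact absurd this (by simp)
  -- dense sequence
  let x : ℕ → S := denseSeq S
  have hx : DenseRange x := denseRange_denseSeq S
  -- small constants
  set δ' : ℕ → ℝ≥0∞ := fun k => δ * 2⁻¹ ^ (k + 1) with hδ'
  have hδ'0 : ∀ k, δ' k ≠ 0 := by
    intro k
    refine mul_ne_zero hδ (pow_ne_zero _ ?_)
    simp
  have hδ'sum : ∑' k, δ' k ≤ δ := by
    rw [hδ']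
    rw [ENNReal.tsum_mul_left]
    have h2 : ∑' k : ℕ, (2⁻¹ : ℝ≥0∞) ^ (k + 1) = 1 := by
      have : ∀ k : ℕ, (2⁻¹ : ℝ≥0∞) ^ (k + 1) = 2⁻¹ * 2⁻¹ ^ k := fun k => by ring
      simp only [this]
      rw [ENNReal.tsum_mul_left, ENNReal.tsum_geometric, ENNReal.one_sub_inv_two, inv_inv]
      exact ENNReal.inv_mul_cancel (by simp) (by simp)
    rw [h2, mul_one]
  -- the balls
  set W : ℕ → ℕ → Set S := fun k m => ⋃ i ∈ Finset.range m, ball (x i) (1 / (k + 1)) with hW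
  have hWopen : ∀ k m, IsOpen (W k m) := by
    intro k m
    exact isOpen_biUnion (fun i _ => isOpen_ball)
  have hWmono : ∀ k, Monotone (W k) := by
    intro k m m' hmm'
    exact biUnion_subset_biUnion_left (Finset.range_subset_range.mpr hmm')
  have hWunion : ∀ k, ⋃ m, W k m = univ := by
    intro k
    refine eq_univ_of_forall (fun s => ?_)
    have hr : (0 : ℝ) < 1 / (k + 1) := by positivity
    obtain ⟨i, hi⟩ := (Metric.denseRange_iff.mp hx) s _ hr
    exact mem_iUnion.mpr ⟨i + 1, mem_biUnion (Finset.self_mem_range_succ i) (by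
      simpa [dist_comm] using hi)⟩
  -- for any probability measure, W k m eventually has large mass
  have hfill : ∀ (ρ : Measure S) [IsProbabilityMeasure ρ], ∀ k,
      ∀ᶠ m in atTop, 1 - δ' k < ρ (W k m) := by
    intro ρ hρ k
    have h1 : Tendsto (fun m => ρ (W k m)) atTop (𝓝 (ρ (⋃ m, W k m))) :=
      tendsto_measure_iUnion_atTop (hWmono k)
    rw [hWunion k, measure_univ] at h1
    have hlt : (1 : ℝ≥0∞) - δ' k < 1 :=
      ENNReal.sub_lt_self ENNReal.one_ne_top one_ne_zero (hδ'0 k)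
    exact h1 (Ioi_mem_nhds hlt)
  -- key step: a single m works for all n simultaneously
  have key : ∀ k, ∃ M, ∀ n, 1 - δ' k < (ν n : Measure S) (W k M) := by
    intro k
    obtain ⟨m₀, hm₀⟩ := (hfill (μ : Measure S) k).exists
    have hliminf : (μ : Measure S) (W k m₀) ≤
        atTop.liminf (fun n => (ν n : Measure S) (W k m₀)) :=
      ProbabilityMeasure.le_liminf_measure_open_of_tendsto hconv (hWopen k m₀)
    have hev : ∀ᶠ n in atTop, 1 - δ' k < (ν n : Measure S) (W k m₀) :=
      eventually_lt_of_lt_liminf (lt_of_lt_of_le hm₀ hliminf)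
    obtain ⟨N, hN⟩ := eventually_atTop.mp hev
    have hsmall : ∀ n, ∃ m, 1 - δ' k < (ν n : Measure S) (W k m) := by
      intro n
      exact (hfill (ν n : Measure S) k).exists
    choose mf hmf using hsmall
    refine ⟨max m₀ ((Finset.range N).sup mf), fun n => ?_⟩
    by_cases hn : N ≤ n
    · exact lt_of_lt_of_le (hN n hn)
        (measure_mono (hWmono k (le_max_left _ _)))
    · push_neg at hn
      refine lt_of_lt_of_le (hmf n) (measure_mono (hWmono k ?_))
      exact le_max_of_le_right (Finset.le_sup (Finset.mem_range.mpr hn))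
  choose M hM using key
  -- the compact set
  set s : Set S := ⋂ k, W k (M k) with hs
  have hTB : TotallyBounded s := by
    rw [Metric.totallyBounded_iff]
    intro ε hε
    obtain ⟨k, hk⟩ := exists_nat_one_div_lt hε
    refine ⟨x '' {i | i < M k}, (toFinite _).image x, ?_⟩
    refine (iInter_subset _ k).trans ?_
    intro z hz
    obtain ⟨i, hi, hzi⟩ := mem_iUnion₂.mp hz
    refine mem_biUnion ⟨i, Finset.mem_range.mp hi, rfl⟩ ?_
    exact ball_subset_ball hk.le hzi
  have hKcomp : IsCompact (closure s) :=
    TotallyBounded.isCompact_of_isClosed hTB.closure isClosed_closure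
  refine ⟨closure s, hKcomp, fun n => ?_⟩
  have h1 : (closure s)ᶜ ⊆ ⋃ k, (W k (M k))ᶜ := by
    rw [← compl_iInter]
    exact compl_subset_compl.mpr subset_closure
  calc (ν n : Measure S) (closure s)ᶜ
      ≤ (ν n : Measure S) (⋃ k, (W k (M k))ᶜ) := measure_mono h1
    _ ≤ ∑' k, (ν n : Measure S) (W k (M k))ᶜ := measure_iUnion_le _
    _ ≤ ∑' k, δ' k := ENNReal.tsum_le_tsum (fun k => by
        rw [prob_compl_eq_one_sub (hWopen k (M k)).measurableSet]
        rw [tsub_le_iff_right, add_comm]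
        exact tsub_le_iff_right.mp (hM k n).le)
    _ ≤ δ := hδ'sum

end Tight

end StatRelAux

open StatRelAux

/-- Comparison of stationary distributions: let `X1`, `X2` be (Markov) processes,
represented through their time-`t` distributions `X_i x t` started from `x`, whose
distributions converge weakly to stationary distributions `μ1`, `μ2` from every initial
state. If there is a nonempty closed subrelation `R' ⊆ R` such that `(x1, x2) ∈ R'`
implies that `X1 x1 t` and `X2 x2 t` admit a coupling supported on `R'` for all `t`,
then `(μ1, μ2) ∈ R_st`, i.e. `μ1` and `μ2` admit a coupling supported on `R`. -/
theorem stationary_distributions_stochastically_related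
    {S1 S2 : Type*}
    [MeasurableSpace S1] [TopologicalSpace S1] [PolishSpace S1] [BorelSpace S1]
    [MeasurableSpace S2] [TopologicalSpace S2] [PolishSpace S2] [BorelSpace S2]
    (X1 : S1 → ℝ → ProbabilityMeasure S1) (X2 : S2 → ℝ → ProbabilityMeasure S2)
    (μ1 : ProbabilityMeasure S1) (μ2 : ProbabilityMeasure S2)
    (hconv1 : ∀ x : S1, Tendsto (fun t => X1 x t) atTop (nhds μ1))
    (hconv2 : ∀ x : S2, Tendsto (fun t => X2 x t) atTop (nhds μ2))
    (R : Set (S1 × S2)) (hRmeas : MeasurableSet R)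
    (R' : Set (S1 × S2)) (hR'sub : R' ⊆ R) (hR'closed : IsClosed R')
    (hR'ne : R'.Nonempty)
    (hpres : ∀ p ∈ R', ∀ t : ℝ, ∃ lam : Measure (S1 × S2), IsProbabilityMeasure lam ∧
        lam.fst = (X1 p.1 t : Measure S1) ∧ lam.snd = (X2 p.2 t : Measure S2) ∧
        lam R' = 1) :
    ∃ lam : Measure (S1 × S2), IsProbabilityMeasure lam ∧
      lam.fst = (μ1 : Measure S1) ∧ lam.snd = (μ2 : Measure S2) ∧ lam R = 1 := by
  classical
  obtain ⟨p, hpR'⟩ := hR'ne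
  choose lamseq hlprob hlfst hlsnd hlR' using fun n : ℕ => hpres p hpR' (n : ℝ)
  letI := upgradeIsCompletelyMetrizable S1
  letI := upgradeIsCompletelyMetrizable S2
  set U : Ultrafilter ℕ := Ultrafilter.of atTop with hU
  have hUle : (U : Filter ℕ) ≤ atTop := Ultrafilter.of_le _
  -- convergence of the marginals along ℕ
  have hν1conv : Tendsto (fun n : ℕ => X1 p.1 (n : ℝ)) atTop (𝓝 μ1) :=
    (hconv1 p.1).comp tendsto_natCast_atTop_atTop
  have hν2conv : Tendsto (fun n : ℕ => X2 p.2 (n : ℝ)) atTop (𝓝 μ2) :=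
    (hconv2 p.2).comp tendsto_natCast_atTop_atTop
  -- preimage identities
  have hpre1 : ∀ E : Set S1, Prod.fst ⁻¹' E = E ×ˢ (univ : Set S2) := by
    intro E; ext z; simp
  have hpre2 : ∀ E : Set S2, Prod.snd ⁻¹' E = (univ : Set S1) ×ˢ E := by
    intro E; ext z; simp
  -- tightness of the sequence of couplings
  have htight : ∀ δ : ℝ≥0∞, δ ≠ 0 →
      ∃ K : Set (S1 × S2), IsCompact K ∧ ∀ n, lamseq n Kᶜ ≤ δ := by
    intro δ hδ
    have hδ2 : δ / 2 ≠ 0 := by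
      simp [ENNReal.div_eq_zero_iff, hδ]
    obtain ⟨K1, hK1c, hK1⟩ := tight_of_tendsto (fun n : ℕ => X1 p.1 (n : ℝ)) μ1 hν1conv hδ2
    obtain ⟨K2, hK2c, hK2⟩ := tight_of_tendsto (fun n : ℕ => X2 p.2 (n : ℝ)) μ2 hν2conv hδ2
    refine ⟨K1 ×ˢ K2, hK1c.prod hK2c, fun n => ?_⟩
    have h1 : lamseq n (K1ᶜ ×ˢ (univ : Set S2)) ≤ δ / 2 := by
      rw [← hpre1, ← Measure.fst_apply hK1c.isClosed.measurableSet.compl, hlfst n]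
      exact hK1 n
    have h2 : lamseq n ((univ : Set S1) ×ˢ K2ᶜ) ≤ δ / 2 := by
      rw [← hpre2, ← Measure.snd_apply hK2c.isClosed.measurableSet.compl, hlsnd n]
      exact hK2 n
    calc lamseq n (K1 ×ˢ K2)ᶜ
        = lamseq n ((K1ᶜ ×ˢ (univ : Set S2)) ∪ ((univ : Set S1) ×ˢ K2ᶜ)) := by
          rw [compl_prod_eq_union]
      _ ≤ lamseq n (K1ᶜ ×ˢ (univ : Set S2)) + lamseq n ((univ : Set S1) ×ˢ K2ᶜ) :=
          measure_union_le _ _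
      _ ≤ δ / 2 + δ / 2 := add_le_add h1 h2
      _ = δ := ENNReal.add_halves δ
  -- limit measure along the ultrafilter
  obtain ⟨μlim, hμprob, hopen, hclosed⟩ := exists_limit_measure U lamseq hlprob htight
  haveI : IsProbabilityMeasure μlim := hμprob
  -- convergence along the ultrafilter for null-frontier sets
  have hnf : ∀ A : Set (S1 × S2), μlim (frontier A) = 0 →
      Tendsto (fun n => lamseq n A) ↑U (𝓝 (μlim A)) := by
    intro A hA
    have h1 : μlim (interior A) ≤ ulim U (fun n => lamseq n (interior A)) :=
      hopen _ isOpen_interior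
    have h2 : ulim U (fun n => lamseq n (interior A)) ≤ ulim U (fun n => lamseq n A) :=
      ulim_mono (fun n => measure_mono interior_subset)
    have h3 : ulim U (fun n => lamseq n A) ≤ ulim U (fun n => lamseq n (closure A)) :=
      ulim_mono (fun n => measure_mono subset_closure)
    have h4 : ulim U (fun n => lamseq n (closure A)) ≤ μlim (closure A) :=
      hclosed _ isClosed_closure
    have h5 : μlim (closure A) ≤ μlim (interior A) := by
      have hsub : closure A ⊆ interior A ∪ frontier A := by
        intro z hz
        by_cases hz' : z ∈ interior A
        · exact Or.inl hz'
        · exact Or.inr ⟨hz, hz'⟩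
      calc μlim (closure A) ≤ μlim (interior A ∪ frontier A) := measure_mono hsub
        _ ≤ μlim (interior A) + μlim (frontier A) := measure_union_le _ _
        _ = μlim (interior A) := by rw [hA, add_zero]
    have heq : ulim U (fun n => lamseq n A) = μlim A := by
      have hia : μlim (interior A) = μlim (closure A) :=
        le_antisymm (measure_mono (interior_subset.trans subset_closure)) h5
      have hAcl : μlim A = μlim (closure A) :=
        le_antisymm (measure_mono subset_closure)
          (h5.trans (measure_mono interior_subset))
      apply le_antisymm
      · exact h3.trans (h4.trans hAcl.ge)
      · calc μlim A ≤ μlim (closure A) := measure_mono subset_closure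
          _ ≤ μlim (interior A) := h5
          _ ≤ ulim U (fun n => lamseq n (interior A)) := h1
          _ ≤ ulim U (fun n => lamseq n A) := h2
    rw [← heq]
    exact tendsto_ulim U _
  -- identification of the first marginal
  haveI : NeBot (U : Filter ℕ) := U.neBot
  have hfst : μlim.fst = (μ1 : Measure S1) := by
    refine ext_of_generate_finite {F : Set S1 | IsClosed F} ?_ ?_ ?_ ?_
    · rw [BorelSpace.measurable_eq (α := S1), borel_eq_generateFrom_isClosed]
    · exact fun s hs t ht _ => hs.inter ht
    · intro F hF
      obtain ⟨rs, hrs0, hrs⟩ :=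
        exists_null_frontiers_thickening (μlim.fst + (μ1 : Measure S1)) F
      have hfrontf : ∀ n, μlim.fst (frontier (thickening (rs n) F)) = 0 := by
        intro n
        have := (hrs n).2
        rw [Measure.add_apply] at this
        exact (add_eq_zero.mp this).1
      have hfront1 : ∀ n, (μ1 : Measure S1) (frontier (thickening (rs n) F)) = 0 := by
        intro n
        have := (hrs n).2
        rw [Measure.add_apply] at this
        exact (add_eq_zero.mp this).2
      -- key pointwise identity on thickenings
      have hstep : ∀ n, μlim.fst (thickening (rs n) F) = (μ1 : Measure S1) (thickening (rs n) F) := by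
        intro n
        set E : Set S1 := thickening (rs n) F with hE
        have hEopen : IsOpen E := isOpen_thickening
        -- convergence of the couplings' first marginal to μlim.fst
        have hfr : μlim (frontier (E ×ˢ (univ : Set S2))) = 0 := by
          rw [frontier_prod_univ_eq, ← hpre1,
            ← Measure.fst_apply isClosed_frontier.measurableSet]
          exact hfrontf n
        have hA := hnf (E ×ˢ (univ : Set S2)) hfr
        have hfun : (fun k => lamseq k (E ×ˢ (univ : Set S2)))
            = fun (k : ℕ) => (X1 p.1 (k : ℝ) : Measure S1) E := by
          funext k
          rw [← hpre1, ← Measure.fst_apply hEopen.measurableSet, hlfst k]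
        have hμE : μlim (E ×ˢ (univ : Set S2)) = μlim.fst E := by
          rw [Measure.fst_apply hEopen.measurableSet, hpre1]
        rw [hfun, hμE] at hA
        -- convergence of the same sequence to μ1
        have hopens1 : ∀ G : Set S1, IsOpen G →
            (μ1 : Measure S1) G ≤ (U : Filter ℕ).liminf
              (fun (k : ℕ) => (X1 p.1 (k : ℝ) : Measure S1) G) := by
          intro G hG
          exact ProbabilityMeasure.le_liminf_measure_open_of_tendsto
            (hν1conv.mono_left hUle) hG
        have hB : Tendsto (fun (k : ℕ) => (X1 p.1 (k : ℝ) : Measure S1) E) ↑U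
            (𝓝 ((μ1 : Measure S1) E)) :=
          tendsto_measure_of_null_frontier hopens1 (hfront1 n)
        exact tendsto_nhds_unique hA hB
      -- pass to the limit in the thickening radius
      have hrs' : Tendsto rs atTop (𝓝[>] 0) :=
        tendsto_nhdsWithin_of_tendsto_nhds_of_eventually_within rs hrs0
          (Eventually.of_forall (fun n => (hrs n).1))
      have t1 : Tendsto (fun n => μlim.fst (thickening (rs n) F)) atTop
          (𝓝 (μlim.fst F)) :=
        (tendsto_measure_thickening_of_isClosed
          ⟨1, one_pos, measure_ne_top _ _⟩ hF).comp hrs'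
      have t2 : Tendsto (fun n => (μ1 : Measure S1) (thickening (rs n) F)) atTop
          (𝓝 ((μ1 : Measure S1) F)) :=
        (tendsto_measure_thickening_of_isClosed
          ⟨1, one_pos, measure_ne_top _ _⟩ hF).comp hrs'
      have : (fun n => μlim.fst (thickening (rs n) F))
          = fun n => (μ1 : Measure S1) (thickening (rs n) F) := funext hstep
      rw [this] at t1
      exact tendsto_nhds_unique t1 t2
    · rw [Measure.fst_univ]
      rw [measure_univ, measure_univ]
  -- identification of the second marginal
  have hsnd : μlim.snd = (μ2 : Measure S2) := by
    refine ext_of_generate_finite {F : Set S2 | IsClosed F} ?_ ?_ ?_ ?_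
    · rw [BorelSpace.measurable_eq (α := S2), borel_eq_generateFrom_isClosed]
    · exact fun s hs t ht _ => hs.inter ht
    · intro F hF
      obtain ⟨rs, hrs0, hrs⟩ :=
        exists_null_frontiers_thickening (μlim.snd + (μ2 : Measure S2)) F
      have hfrontf : ∀ n, μlim.snd (frontier (thickening (rs n) F)) = 0 := by
        intro n
        have := (hrs n).2
        rw [Measure.add_apply] at this
        exact (add_eq_zero.mp this).1
      have hfront2 : ∀ n, (μ2 : Measure S2) (frontier (thickening (rs n) F)) = 0 := by
        intro n
        have := (hrs n).2
        rw [Measure.add_apply] at this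
        exact (add_eq_zero.mp this).2
      have hstep : ∀ n, μlim.snd (thickening (rs n) F) = (μ2 : Measure S2) (thickening (rs n) F) := by
        intro n
        set E : Set S2 := thickening (rs n) F with hE
        have hEopen : IsOpen E := isOpen_thickening
        have hfr : μlim (frontier ((univ : Set S1) ×ˢ E)) = 0 := by
          rw [frontier_univ_prod_eq, ← hpre2,
            ← Measure.snd_apply isClosed_frontier.measurableSet]
          exact hfrontf n
        have hA := hnf ((univ : Set S1) ×ˢ E) hfr
        have hfun : (fun k => lamseq k ((univ : Set S1) ×ˢ E))
            = fun (k : ℕ) => (X2 p.2 (k : ℝ) : Measure S2) E := by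
          funext k
          rw [← hpre2, ← Measure.snd_apply hEopen.measurableSet, hlsnd k]
        have hμE : μlim ((univ : Set S1) ×ˢ E) = μlim.snd E := by
          rw [Measure.snd_apply hEopen.measurableSet, hpre2]
        rw [hfun, hμE] at hA
        have hopens2 : ∀ G : Set S2, IsOpen G →
            (μ2 : Measure S2) G ≤ (U : Filter ℕ).liminf
              (fun (k : ℕ) => (X2 p.2 (k : ℝ) : Measure S2) G) := by
          intro G hG
          exact ProbabilityMeasure.le_liminf_measure_open_of_tendsto
            (hν2conv.mono_left hUle) hG
        have hB : Tendsto (fun (k : ℕ) => (X2 p.2 (k : ℝ) : Measure S2) E) ↑U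
            (𝓝 ((μ2 : Measure S2) E)) :=
          tendsto_measure_of_null_frontier hopens2 (hfront2 n)
        exact tendsto_nhds_unique hA hB
      have hrs' : Tendsto rs atTop (𝓝[>] 0) :=
        tendsto_nhdsWithin_of_tendsto_nhds_of_eventually_within rs hrs0
          (Eventually.of_forall (fun n => (hrs n).1))
      have t1 : Tendsto (fun n => μlim.snd (thickening (rs n) F)) atTop
          (𝓝 (μlim.snd F)) :=
        (tendsto_measure_thickening_of_isClosed
          ⟨1, one_pos, measure_ne_top _ _⟩ hF).comp hrs'
      have t2 : Tendsto (fun n => (μ2 : Measure S2) (thickening (rs n) F)) atTop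
          (𝓝 ((μ2 : Measure S2) F)) :=
        (tendsto_measure_thickening_of_isClosed
          ⟨1, one_pos, measure_ne_top _ _⟩ hF).comp hrs'
      have : (fun n => μlim.snd (thickening (rs n) F))
          = fun n => (μ2 : Measure S2) (thickening (rs n) F) := funext hstep
      rw [this] at t1
      exact tendsto_nhds_unique t1 t2
    · rw [Measure.snd_univ]
      rw [measure_univ, measure_univ]
  -- μlim gives full mass to R
  have hR'one : μlim R' = 1 := by
    have h1 : (1 : ℝ≥0∞) ≤ μlim R' := by
      have := hclosed R' hR'closed
      have hconst : (fun n => lamseq n R') = fun _ => (1 : ℝ≥0∞) := funext hlR'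
      rw [show (fun n => lamseq n R') = fun _ => (1 : ℝ≥0∞) from hconst] at this
      rwa [ulim_const] at this
    exact le_antisymm prob_le_one h1
  refine ⟨μlim, hμprob, hfst, hsnd, ?_⟩
  exact le_antisymm prob_le_one (hR'one ▸ measure_mono hR'sub)
end

section
/- Let R be a relation on a Polish space S with pushforwards: define the induced relation R' = {(x1,x2) ∈ S1' × S2' : (φ1(x1), φ2(x2)) ∈ R} for continuous maps φ_i : S_i' → S_i. Then probability measures μ1 on S1' and μ2 on S2' satisfy (μ1, μ2) ∈ R'_st if and only if (μ1 ∘ φ1^{-1}, μ2 ∘ φ2^{-1}) ∈ R_st. -/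
open MeasureTheory ProbabilityTheory Set

lemma aux_ae_eq_one_of_lintegral_eq_one {α : Type*} [MeasurableSpace α] (μ : Measure α)
    [IsProbabilityMeasure μ] {f : α → ENNReal} (hf : Measurable f) (hle : ∀ a, f a ≤ 1)
    (h : ∫⁻ a, f a ∂μ = 1) : ∀ᵐ a ∂μ, f a = 1 := by
  have h0 : ∫⁻ a, (1 : ENNReal) - f a ∂μ = 0 := by
    rw [lintegral_sub hf (by simp [h]) (Filter.Eventually.of_forall hle)]
    simp [h]
  have := (lintegral_eq_zero_iff (measurable_const.sub hf)).mp h0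
  filter_upwards [this] with a ha
  exact le_antisymm (hle a) (by simpa [tsub_eq_zero_iff_le] using ha)

/-- Disintegration of a probability measure over a continuous map between Polish spaces. -/
lemma aux_exists_condKernel {S S' : Type*}
    [MeasurableSpace S] [TopologicalSpace S] [PolishSpace S] [BorelSpace S]
    [MeasurableSpace S'] [TopologicalSpace S'] [PolishSpace S'] [BorelSpace S'] [Nonempty S']
    (φ : S' → S) (hφ : Continuous φ) (μ : Measure S') [IsProbabilityMeasure μ] :
    ∃ κ : Kernel S S', IsMarkovKernel κ ∧
      (∀ s : Set S', MeasurableSet s → ∫⁻ a, κ a s ∂(μ.map φ) = μ s) ∧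
      (∀ᵐ a ∂(μ.map φ), κ a {x | φ x = a} = 1) := by
  have hm : Measurable fun x => (φ x, x) := hφ.measurable.prodMk measurable_id
  set ν : Measure (S × S') := μ.map (fun x => (φ x, x)) with hν
  haveI : IsProbabilityMeasure ν := Measure.isProbabilityMeasure_map hm.aemeasurable
  have hfst : ν.fst = μ.map φ := by
    rw [Measure.fst, hν, Measure.map_map measurable_fst hm]
    rfl
  refine ⟨ν.condKernel, inferInstance, ?_, ?_⟩
  · intro s hs
    have h1 : μ s = ν (Prod.snd ⁻¹' s) := by
      rw [hν, Measure.map_apply hm (measurable_snd hs)]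
      congr
    rw [h1]
    conv_rhs => rw [← ν.disintegrate ν.condKernel]
    rw [Measure.compProd_apply (measurable_snd hs), hfst]
    rfl
  · have hC : MeasurableSet {p : S × S' | φ p.2 = p.1} :=
      (isClosed_eq (hφ.comp continuous_snd) continuous_fst).measurableSet
    have hint : ∫⁻ a, ν.condKernel a {x | φ x = a} ∂(μ.map φ) = 1 := by
      have h1 : ν {p : S × S' | φ p.2 = p.1} = 1 := by
        rw [hν, Measure.map_apply hm hC]
        have : (fun x => (φ x, x)) ⁻¹' {p : S × S' | φ p.2 = p.1} = univ := by
          ext x; simp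
        rw [this]; simp
      conv_rhs => rw [← h1, ← ν.disintegrate ν.condKernel]
      rw [Measure.compProd_apply hC, hfst]
      rfl
    rw [← hfst] at hint ⊢
    have hmeas : Measurable fun a => ν.condKernel a {x | φ x = a} := by
      exact Kernel.measurable_kernel_prodMk_left (κ := ν.condKernel) hC
    exact aux_ae_eq_one_of_lintegral_eq_one _ hmeas (fun a => prob_le_one) hint

/-- Induced relations: for a closed relation `R ⊆ S1 × S2` and continuous maps
`φ_i : S_i' → S_i`, let `R' = {(x1, x2) | (φ1 x1, φ2 x2) ∈ R}` be the induced relation.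
Then probability measures `μ1` on `S1'` and `μ2` on `S2'` admit a coupling supported on
`R'` if and only if the pushforwards `μ1 ∘ φ1⁻¹` and `μ2 ∘ φ2⁻¹` admit a coupling
supported on `R`. -/
theorem induced_relation_stochastic_iff
    {S1 S2 S1' S2' : Type*}
    [MeasurableSpace S1] [TopologicalSpace S1] [PolishSpace S1] [BorelSpace S1]
    [MeasurableSpace S2] [TopologicalSpace S2] [PolishSpace S2] [BorelSpace S2]
    [MeasurableSpace S1'] [TopologicalSpace S1'] [PolishSpace S1'] [BorelSpace S1']
    [MeasurableSpace S2'] [TopologicalSpace S2'] [PolishSpace S2'] [BorelSpace S2']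
    (R : Set (S1 × S2)) (hR : IsClosed R)
    (φ1 : S1' → S1) (φ2 : S2' → S2) (hφ1 : Continuous φ1) (hφ2 : Continuous φ2)
    (μ1 : Measure S1') (μ2 : Measure S2')
    [IsProbabilityMeasure μ1] [IsProbabilityMeasure μ2] :
    (∃ lam : Measure (S1' × S2'), IsProbabilityMeasure lam ∧
        lam.fst = μ1 ∧ lam.snd = μ2 ∧
        lam {p : S1' × S2' | (φ1 p.1, φ2 p.2) ∈ R} = 1)
      ↔ (∃ lam : Measure (S1 × S2), IsProbabilityMeasure lam ∧
          lam.fst = μ1.map φ1 ∧ lam.snd = μ2.map φ2 ∧ lam R = 1) := by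
  haveI : Nonempty S1' := μ1.nonempty_of_neZero
  haveI : Nonempty S2' := μ2.nonempty_of_neZero
  have hmap : Measurable (Prod.map φ1 φ2) := hφ1.measurable.prodMap hφ2.measurable
  have hR' : MeasurableSet {p : S1' × S2' | (φ1 p.1, φ2 p.2) ∈ R} :=
    (hR.preimage ((hφ1.comp continuous_fst).prodMk (hφ2.comp continuous_snd))).measurableSet
  constructor
  · rintro ⟨lam, hprob, hfst, hsnd, hsupp⟩
    refine ⟨lam.map (Prod.map φ1 φ2), Measure.isProbabilityMeasure_map hmap.aemeasurable, ?_, ?_, ?_⟩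
    · rw [Measure.fst, Measure.map_map measurable_fst hmap, ← hfst, Measure.fst,
        Measure.map_map hφ1.measurable measurable_fst]
      rfl
    · rw [Measure.snd, Measure.map_map measurable_snd hmap, ← hsnd, Measure.snd,
        Measure.map_map hφ2.measurable measurable_snd]
      rfl
    · rw [Measure.map_apply hmap hR.measurableSet]
      exact hsupp
  · rintro ⟨lam, hprob, hfst, hsnd, hsupp⟩
    obtain ⟨κ1, hκ1M, hκ1rec, hκ1ae⟩ := aux_exists_condKernel φ1 hφ1 μ1
    obtain ⟨κ2, hκ2M, hκ2rec, hκ2ae⟩ := aux_exists_condKernel φ2 hφ2 μ2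
    haveI := hκ1M; haveI := hκ2M
    set η : Kernel (S1 × S2) (S1' × S2') :=
      (κ1.comap Prod.fst measurable_fst) ×ₖ (κ2.comap Prod.snd measurable_snd) with hη
    haveI : IsMarkovKernel η := by rw [hη]; infer_instance
    have hηapp : ∀ p : S1 × S2, η p = (κ1 p.1).prod (κ2 p.2) := by
      intro p
      rw [hη, Kernel.prod_apply]
      rfl
    refine ⟨lam.bind η, ?_, ?_, ?_, ?_⟩
    · constructor
      rw [Measure.bind_apply MeasurableSet.univ η.measurable.aemeasurable]
      simp
    · ext s hs
      rw [Measure.fst_apply hs, Measure.bind_apply (measurable_fst hs) η.measurable.aemeasurable]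
      have : ∀ p : S1 × S2, η p (Prod.fst ⁻¹' s) = κ1 p.1 s := by
        intro p
        rw [hηapp, ← prod_univ, Measure.prod_prod]
        simp
      simp_rw [this]
      have hmf : Measurable fun a => κ1 a s := κ1.measurable_coe hs
      calc ∫⁻ p : S1 × S2, κ1 p.1 s ∂lam
          = ∫⁻ a, κ1 a s ∂lam.fst := by
            rw [Measure.fst, lintegral_map hmf measurable_fst]
        _ = μ1 s := by rw [hfst]; exact hκ1rec s hs
    · ext s hs
      rw [Measure.snd_apply hs, Measure.bind_apply (measurable_snd hs) η.measurable.aemeasurable]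
      have : ∀ p : S1 × S2, η p (Prod.snd ⁻¹' s) = κ2 p.2 s := by
        intro p
        rw [hηapp, ← univ_prod, Measure.prod_prod]
        simp
      simp_rw [this]
      have hmf : Measurable fun a => κ2 a s := κ2.measurable_coe hs
      calc ∫⁻ p : S1 × S2, κ2 p.2 s ∂lam
          = ∫⁻ a, κ2 a s ∂lam.snd := by
            rw [Measure.snd, lintegral_map hmf measurable_snd]
        _ = μ2 s := by rw [hsnd]; exact hκ2rec s hs
    · rw [Measure.bind_apply hR' η.measurable.aemeasurable]
      -- transfer a.e. statements to lam
      have hmeas1 : MeasurableSet {a : S1 | κ1 a {x | φ1 x = a} = 1} := by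
        have hC : MeasurableSet {p : S1 × S1' | φ1 p.2 = p.1} :=
          (isClosed_eq (hφ1.comp continuous_snd) continuous_fst).measurableSet
        have hm : Measurable fun a => κ1 a {x | φ1 x = a} := by
          exact Kernel.measurable_kernel_prodMk_left (κ := κ1) hC
        exact hm (measurableSet_singleton 1)
      have hmeas2 : MeasurableSet {a : S2 | κ2 a {x | φ2 x = a} = 1} := by
        have hC : MeasurableSet {p : S2 × S2' | φ2 p.2 = p.1} :=
          (isClosed_eq (hφ2.comp continuous_snd) continuous_fst).measurableSet
        have hm : Measurable fun a => κ2 a {x | φ2 x = a} := by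
          exact Kernel.measurable_kernel_prodMk_left (κ := κ2) hC
        exact hm (measurableSet_singleton 1)
      have h1 : ∀ᵐ p : S1 × S2 ∂lam, κ1 p.1 {x | φ1 x = p.1} = 1 := by
        rw [← hfst] at hκ1ae
        rw [Measure.fst] at hκ1ae
        exact (ae_map_iff measurable_fst.aemeasurable hmeas1).mp hκ1ae
      have h2 : ∀ᵐ p : S1 × S2 ∂lam, κ2 p.2 {x | φ2 x = p.2} = 1 := by
        rw [← hsnd] at hκ2ae
        rw [Measure.snd] at hκ2ae
        exact (ae_map_iff measurable_snd.aemeasurable hmeas2).mp hκ2ae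
      have h3 : ∀ᵐ p : S1 × S2 ∂lam, p ∈ R := by
        rw [ae_iff]
        have : {p : S1 × S2 | ¬ p ∈ R} = Rᶜ := rfl
        rw [this, measure_compl hR.measurableSet (measure_ne_top _ _), hsupp]
        simp
      have hae : ∀ᵐ p : S1 × S2 ∂lam,
          η p {q : S1' × S2' | (φ1 q.1, φ2 q.2) ∈ R} = 1 := by
        filter_upwards [h1, h2, h3] with p hp1 hp2 hp3
        haveI : IsProbabilityMeasure (η p) := IsMarkovKernel.isProbabilityMeasure p
        refine le_antisymm prob_le_one ?_
        have hsub : {x | φ1 x = p.1} ×ˢ {y | φ2 y = p.2}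
            ⊆ {q : S1' × S2' | (φ1 q.1, φ2 q.2) ∈ R} := by
          rintro ⟨x, y⟩ ⟨hx, hy⟩
          simp only [mem_setOf_eq] at hx hy ⊢
          rw [hx, hy]
          exact hp3
        calc (1 : ENNReal) = (κ1 p.1).prod (κ2 p.2) ({x | φ1 x = p.1} ×ˢ {y | φ2 y = p.2}) := by
              rw [Measure.prod_prod, hp1, hp2, one_mul]
          _ ≤ η p {q : S1' × S2' | (φ1 q.1, φ2 q.2) ∈ R} := by
              rw [hηapp]; exact measure_mono hsub
      rw [lintegral_congr_ae hae]
      simp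
end
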